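/- A numerical semigroup S is Apéry half-factorial if and only if its Apéry poset is graded, i.e., for every x ∈ Ap(S), all maximal chains from 0 to x in the poset (Ap(S), ⪯) have the same length. -/

import Mathlib

/-- A numerical semigroup: a cofinite additive submonoid of ℕ. -/
def IsNumericalSemigroup (S : Set ℕ) : Prop :=
  0 ∈ S ∧ (∀ a ∈ S, ∀ b ∈ S, a + b ∈ S) ∧ (Sᶜ : Set ℕ).Finite

/-- The multiplicity: the smallest nonzero element. -/
noncomputable def mult (S : Set ℕ) : ℕ := sInf {n | n ∈ S ∧ n ≠ 0}

/-- The Apéry set of `S` with respect to `m`: elements `x ∈ S` with `x - m ∉ S`. -/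
def Apery (S : Set ℕ) (m : ℕ) : Set ℕ :=
  {x | x ∈ S ∧ ¬∃ y ∈ S, x = y + m}

/-- The atoms of `S`: nonzero elements not a sum of two nonzero elements of `S`. -/
def Atoms (S : Set ℕ) : Set ℕ :=
  {x | x ∈ S ∧ x ≠ 0 ∧ ¬∃ a ∈ S, ∃ b ∈ S, a ≠ 0 ∧ b ≠ 0 ∧ x = a + b}

/-- The set of factorization lengths of `n` over the atom set `A`. -/
def FactLens (A : Set ℕ) (n : ℕ) : Set ℕ :=
  {L | ∃ c : ℕ →₀ ℕ, (↑c.support : Set ℕ) ⊆ A ∧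
    c.sum (fun x k => k * x) = n ∧ c.sum (fun _ k => k) = L}

/-- `n` is half-factorial: all factorization lengths agree. -/
def HalfFactorial (A : Set ℕ) (n : ℕ) : Prop :=
  ∀ L₁ ∈ FactLens A n, ∀ L₂ ∈ FactLens A n, L₁ = L₂

/-- Elasticity: max factorization length over min, with `ρ(0) = 1`. -/
noncomputable def elasticity (A : Set ℕ) (n : ℕ) : ℚ :=
  if n = 0 then 1 else ((sSup (FactLens A n) : ℕ) : ℚ) / ((sInf (FactLens A n) : ℕ) : ℚ)

/-- The strict order of the Apéry poset: `x ≺ y` iff `y - x` is a nonzero element of `S`. -/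
def PosetLt (S : Set ℕ) (x y : ℕ) : Prop := x ≠ y ∧ ∃ s ∈ S, y = x + s

/-- `y` covers `x` in the Apéry poset. -/
def PosetCovBy (S : Set ℕ) (m x y : ℕ) : Prop :=
  PosetLt S x y ∧ ¬∃ w ∈ Apery S m, PosetLt S x w ∧ PosetLt S w y

/-- `l` is a maximal (saturated) chain from `0` to `x` in the Apéry poset. -/
def MaxChain (S : Set ℕ) (m : ℕ) (l : List ℕ) (x : ℕ) : Prop :=
  (∀ z ∈ l, z ∈ Apery S m) ∧ l.head? = some 0 ∧ l.getLast? = some x ∧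
    l.Chain' (PosetCovBy S m)

section Helpers

variable {S : Set ℕ} {m : ℕ}

/-- The Apéry set is divisor-closed. -/
lemma apery_div (hadd : ∀ a ∈ S, ∀ b ∈ S, a + b ∈ S)
    {x u v : ℕ} (hx : x ∈ Apery S m) (hu : u ∈ S) (hv : v ∈ S) (hxy : x = u + v) :
    u ∈ Apery S m := by
  refine ⟨hu, ?_⟩
  rintro ⟨y, hy, hyu⟩
  exact hx.2 ⟨y + v, hadd _ hy _ hv, by omega⟩

/-- A cover step in the Apéry poset is given by an atom. -/
lemma cov_atom (hadd : ∀ a ∈ S, ∀ b ∈ S, a + b ∈ S)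
    {x y : ℕ} (hx : x ∈ Apery S m) (hy : y ∈ Apery S m)
    (h : PosetCovBy S m x y) : ∃ s ∈ Atoms S, y = x + s := by
  obtain ⟨⟨hne, s, hs, rfl⟩, hnc⟩ := h
  refine ⟨s, ⟨hs, by rintro rfl; omega, ?_⟩, rfl⟩
  rintro ⟨a, ha, b, hb, ha0, hb0, rfl⟩
  exact hnc ⟨x + a, apery_div hadd hy (hadd _ hx.1 _ ha) hb (by ring),
    ⟨by omega, a, ha, rfl⟩, ⟨by omega, b, hb, by ring⟩⟩

/-- Adding an atom to an Apéry element gives a cover step. -/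
lemma atom_cov {x s : ℕ} (hx : x ∈ Apery S m) (hs : s ∈ Atoms S) :
    PosetCovBy S m x (x + s) := by
  obtain ⟨hsS, hs0, hna⟩ := hs
  refine ⟨⟨by omega, s, hsS, rfl⟩, ?_⟩
  rintro ⟨w, hw, ⟨hxw, a, ha, rfl⟩, ⟨hwy, b, hb, hy⟩⟩
  exact hna ⟨a, ha, b, hb, by omega, by omega, by omega⟩

lemma listSum_mem (h0 : (0:ℕ) ∈ S) (hadd : ∀ a ∈ S, ∀ b ∈ S, a + b ∈ S) :
    ∀ f : List ℕ, (∀ a ∈ f, a ∈ S) → f.sum ∈ S := by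
  intro f
  induction f with
  | nil => intro _; simpa using h0
  | cons a t ih =>
    intro h
    rw [List.sum_cons]
    exact hadd _ (h a (by simp)) _ (ih fun z hz => h z (by simp [hz]))

/-- A saturated chain from `a` to `x` yields a factorization of `x - a` into atoms. -/
lemma chain_fact (hadd : ∀ a ∈ S, ∀ b ∈ S, a + b ∈ S) (l : List ℕ) :
    ∀ a x : ℕ, (∀ z ∈ l, z ∈ Apery S m) → l.head? = some a → l.getLast? = some x →
      l.Chain' (PosetCovBy S m) →
      ∃ f : List ℕ, (∀ b ∈ f, b ∈ Atoms S) ∧ x = a + f.sum ∧ l.length = f.length + 1 := by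
  induction l with
  | nil => intro a x _ h _ _; simp at h
  | cons z t ih =>
    intro a x hmem hh hl hc
    have hz : z = a := by simpa using hh
    subst hz
    cases t with
    | nil =>
      have hx : z = x := by simpa using hl
      exact ⟨[], by simp, by simp [hx], by simp⟩
    | cons w t' =>
      unfold List.Chain' at hc; rw [List.isChain_cons_cons] at hc
      obtain ⟨s, hsA, hws⟩ := cov_atom hadd (hmem _ (by simp)) (hmem _ (by simp)) hc.1
      obtain ⟨f, hfA, hxf, hlen⟩ := ih w x (fun u hu => hmem u (by simp [hu]))
        rfl (by simpa using hl) hc.2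
      refine ⟨s :: f, ?_, by simp [hxf, hws]; ring, by simp [hlen]⟩
      intro b hb
      rcases List.mem_cons.1 hb with rfl | hb
      · exact hsA
      · exact hfA b hb

/-- A factorization of `x - a` into atoms yields a saturated chain from `a` to `x`. -/
lemma fact_chain (h0 : (0:ℕ) ∈ S) (hadd : ∀ a ∈ S, ∀ b ∈ S, a + b ∈ S) (f : List ℕ) :
    ∀ a x : ℕ, (∀ b ∈ f, b ∈ Atoms S) → x ∈ Apery S m → a ∈ S → x = a + f.sum →
      ∃ l : List ℕ, (∀ z ∈ l, z ∈ Apery S m) ∧ l.head? = some a ∧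
        l.getLast? = some x ∧ l.Chain' (PosetCovBy S m) ∧ l.length = f.length + 1 := by
  induction f with
  | nil =>
    intro a x _ hx ha hax
    have : x = a := by simpa using hax
    subst this
    exact ⟨[x], by simpa using hx, rfl, by simp, List.isChain_singleton x, by simp⟩
  | cons b f' ih =>
    intro a x hfA hx ha hax
    have hbS : b ∈ S := (hfA b (by simp)).1
    have hsum' : f'.sum ∈ S := listSum_mem h0 hadd f' (fun z hz => (hfA z (by simp [hz])).1)
    have habS : a + b ∈ S := hadd _ ha _ hbS
    have haAp : a ∈ Apery S m :=
      apery_div hadd hx ha (hadd _ hbS _ hsum') (by rw [hax, List.sum_cons])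
    obtain ⟨l', hmem', hh', hl', hc', hlen'⟩ := ih (a + b) x
      (fun z hz => hfA z (by simp [hz])) hx habS (by rw [hax, List.sum_cons, add_assoc])
    cases l' with
    | nil => simp at hh'
    | cons c l'' =>
      have hcab : c = a + b := by simpa using hh'
      subst hcab
      refine ⟨a :: (a + b) :: l'', ?_, rfl, ?_, ?_, by simpa using hlen'⟩
      · rintro z hz
        rcases List.mem_cons.1 hz with rfl | hz
        · exact haAp
        · exact hmem' z hz
      · rw [List.getLast?_cons_cons]; exact hl'
      · unfold List.Chain'; rw [List.isChain_cons_cons]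
        exact ⟨atom_cov haAp (hfA b (by simp)), hc'⟩

lemma finsupp_list (c : ℕ →₀ ℕ) :
    ∃ f : List ℕ, (∀ a ∈ f, a ∈ c.support) ∧ f.sum = c.sum (fun x k => k * x) ∧
      f.length = c.sum (fun _ k => k) := by
  induction c using Finsupp.induction with
  | zero => exact ⟨[], by simp, by simp, by simp⟩
  | single_add a n c han hn ih =>
    obtain ⟨f, hf, hs, hl⟩ := ih
    have hs1 : (Finsupp.single a n + c).sum (fun x k => k * x)
        = n * a + c.sum (fun x k => k * x) := by
      rw [Finsupp.sum_add_index' (by simp) (fun x k1 k2 => by ring),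
        Finsupp.sum_single_index (by simp)]
    have hs2 : (Finsupp.single a n + c).sum (fun _ k => k)
        = n + c.sum (fun _ k => k) := by
      rw [Finsupp.sum_add_index' (by simp) (fun x k1 k2 => rfl),
        Finsupp.sum_single_index rfl]
    refine ⟨List.replicate n a ++ f, ?_, ?_, ?_⟩
    · intro z hz
      rcases List.mem_append.1 hz with hz | hz
      · have : z = a := List.eq_of_mem_replicate hz
        subst this
        rw [Finsupp.mem_support_iff, Finsupp.add_apply, Finsupp.single_eq_same]
        omega
      · have hzc : c z ≠ 0 := Finsupp.mem_support_iff.1 (hf z hz)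
        rw [Finsupp.mem_support_iff, Finsupp.add_apply]
        omega
    · rw [List.sum_append, List.sum_replicate, smul_eq_mul, hs1, hs]
    · rw [List.length_append, List.length_replicate, hs2, hl]

lemma list_finsupp (f : List ℕ) :
    ∃ c : ℕ →₀ ℕ, (∀ a ∈ c.support, a ∈ f) ∧ c.sum (fun x k => k * x) = f.sum ∧
      c.sum (fun _ k => k) = f.length := by
  induction f with
  | nil => exact ⟨0, by simp, by simp, by simp⟩
  | cons a f ih =>
    obtain ⟨c, h1, h2, h3⟩ := ih
    refine ⟨Finsupp.single a 1 + c, ?_, ?_, ?_⟩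
    · intro z hz
      have := Finsupp.support_add hz
      rcases Finset.mem_union.1 this with hz | hz
      · have : z = a := Finset.mem_singleton.1 (Finsupp.support_single_subset hz)
        simp [this]
      · simp [h1 z hz]
    · rw [Finsupp.sum_add_index' (by simp) (fun x k1 k2 => by ring),
        Finsupp.sum_single_index (by simp), h2]
      simp
    · rw [Finsupp.sum_add_index' (by intro x; rfl) (fun x k1 k2 => rfl),
        Finsupp.sum_single_index rfl, h3, List.length_cons]
      omega

end Helpers

theorem AHF_iff_graded (S : Set ℕ) (hS : IsNumericalSemigroup S) :
    (∀ n ∈ Apery S (mult S), HalfFactorial (Atoms S) n) ↔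
    (∀ x ∈ Apery S (mult S), ∀ l₁ l₂ : List ℕ,
      MaxChain S (mult S) l₁ x → MaxChain S (mult S) l₂ x →
        l₁.length = l₂.length) := by
  obtain ⟨h0, hadd, _⟩ := hS
  constructor
  · intro hHF x hx l₁ l₂ h₁ h₂
    obtain ⟨f₁, hf₁A, hx₁, hlen₁⟩ := chain_fact hadd l₁ 0 x h₁.1 h₁.2.1 h₁.2.2.1 h₁.2.2.2
    obtain ⟨f₂, hf₂A, hx₂, hlen₂⟩ := chain_fact hadd l₂ 0 x h₂.1 h₂.2.1 h₂.2.2.1 h₂.2.2.2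
    obtain ⟨c₁, hc₁, hs₁, hL₁⟩ := list_finsupp f₁
    obtain ⟨c₂, hc₂, hs₂, hL₂⟩ := list_finsupp f₂
    have hm₁ : f₁.length ∈ FactLens (Atoms S) x :=
      ⟨c₁, fun z hz => hf₁A z (hc₁ z hz), by omega, hL₁⟩
    have hm₂ : f₂.length ∈ FactLens (Atoms S) x :=
      ⟨c₂, fun z hz => hf₂A z (hc₂ z hz), by omega, hL₂⟩
    have := hHF x hx _ hm₁ _ hm₂
    omega
  · intro hG n hn L₁ hL₁ L₂ hL₂
    obtain ⟨c₁, hc₁A, hs₁, hl₁⟩ := hL₁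
    obtain ⟨c₂, hc₂A, hs₂, hl₂⟩ := hL₂
    obtain ⟨f₁, hf₁, hfs₁, hfl₁⟩ := finsupp_list c₁
    obtain ⟨f₂, hf₂, hfs₂, hfl₂⟩ := finsupp_list c₂
    obtain ⟨l₁, hm₁, hh₁, hg₁, hch₁, hlen₁⟩ := fact_chain h0 hadd f₁ 0 n
      (fun b hb => hc₁A (hf₁ b hb)) hn h0 (by omega)
    obtain ⟨l₂, hm₂, hh₂, hg₂, hch₂, hlen₂⟩ := fact_chain h0 hadd f₂ 0 n
      (fun b hb => hc₂A (hf₂ b hb)) hn h0 (by omega)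
    have := hG n hn l₁ l₂ ⟨hm₁, hh₁, hg₁, hch₁⟩ ⟨hm₂, hh₂, hg₂, hch₂⟩
    omega
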